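/- Let E be the Banach algebra of continuous ℂ-linear endomorphisms of the space of n×n complex matrices. Let 𝓛 : ℝ → E be continuous, λ ∈ ℝ, t_0 ∈ ℝ, and let U : ℝ → E satisfy U(t_0) = 1 and, for every t, U has derivative λ·𝓛(t)∘U(t) at t. Let P ∈ E be idempotent (P∘P = P) and set Q := 1 − P. Fix t ∈ ℝ and suppose G ∈ E satisfies G∘(P∘U(t)∘P) = P, G∘Q = 0, and Q∘G = 0. Define K := λ·(P∘𝓛(t)∘U(t)∘P)∘G and I := λ·P∘𝓛(t)∘U(t)∘Q − K∘(P∘U(t)∘Q). Then λ·P∘𝓛(t)∘U(t) = K∘(P∘U(t)) + I∘Q; consequently, for any n×n complex matrix ρ_0, the function s ↦ P(U(s)ρ_0) has derivative K(P(U(t)ρ_0)) + I(Q ρ_0) at s = t. -/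

import Mathlib

attribute [local instance] Matrix.linftyOpNormedAddCommGroup Matrix.linftyOpNormedSpace

noncomputable instance matrixLinftyOpTopology (n : ℕ) : TopologicalSpace (Matrix (Fin n) (Fin n) ℂ) :=
  (Matrix.linftyOpNormedAddCommGroup : NormedAddCommGroup (Matrix (Fin n) (Fin n) ℂ)).toUniformSpace.toTopologicalSpace

set_option maxHeartbeats 1000000
set_option synthInstance.maxHeartbeats 1000000

/-- the time-convolutionless splitting of the projected propagator.
If `U' = λ 𝓛(t) U`, `U(t_0) = 1`, `P` is idempotent, `Q = 1 - P`, and `G` is a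
pseudoinverse of `P U(t) P` (i.e. `G (P U(t) P) = P`, `G Q = 0`, `Q G = 0`), then with
`K = λ (P 𝓛(t) U(t) P) G` and `I = λ P 𝓛(t) U(t) Q - K (P U(t) Q)` one has
`λ P 𝓛(t) U(t) = K (P U(t)) + I Q`; consequently `s ↦ P(U(s)ρ_0)` has derivative
`K(P(U(t)ρ_0)) + I(Q ρ_0)` at `t`. -/
private lemma smul_mul_aux {n : ℕ} (lam : ℝ)
    (A B : Matrix (Fin n) (Fin n) ℂ →L[ℂ] Matrix (Fin n) (Fin n) ℂ) :
    (lam • A) * B = lam • (A * B) := by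
  ext x
  simp [ContinuousLinearMap.mul_apply]

theorem stmt3 (n : ℕ)
    (𝓛 : ℝ → (Matrix (Fin n) (Fin n) ℂ →L[ℂ] Matrix (Fin n) (Fin n) ℂ))
    (hcont : Continuous 𝓛) (lam : ℝ) (t₀ : ℝ)
    (U : ℝ → (Matrix (Fin n) (Fin n) ℂ →L[ℂ] Matrix (Fin n) (Fin n) ℂ))
    (hU0 : U t₀ = 1)
    (hU : ∀ t, HasDerivAt U (lam • (𝓛 t * U t)) t)
    (P : Matrix (Fin n) (Fin n) ℂ →L[ℂ] Matrix (Fin n) (Fin n) ℂ)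
    (hP : P * P = P)
    (Q : Matrix (Fin n) (Fin n) ℂ →L[ℂ] Matrix (Fin n) (Fin n) ℂ)
    (hQ : Q = 1 - P)
    (t : ℝ)
    (G : Matrix (Fin n) (Fin n) ℂ →L[ℂ] Matrix (Fin n) (Fin n) ℂ)
    (hG1 : G * (P * U t * P) = P) (hG2 : G * Q = 0) (hG3 : Q * G = 0)
    (K I : Matrix (Fin n) (Fin n) ℂ →L[ℂ] Matrix (Fin n) (Fin n) ℂ)
    (hK : K = lam • ((P * 𝓛 t * U t * P) * G))
    (hI : I = lam • (P * 𝓛 t * U t * Q) - K * (P * U t * Q)) :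
    lam • (P * 𝓛 t * U t) = K * (P * U t) + I * Q ∧
      ∀ ρ₀ : Matrix (Fin n) (Fin n) ℂ,
        HasDerivAt (fun s => P (U s ρ₀)) (K (P (U t ρ₀)) + I (Q ρ₀)) t := by
  have hQQ : Q * Q = Q := by
    rw [hQ, sub_mul, mul_sub, mul_sub, one_mul, mul_one, hP]
    abel
  have hPQ1 : P + Q = 1 := by rw [hQ]; abel
  have h1 : K * (P * U t * P) = lam • (P * 𝓛 t * U t * P) := by
    rw [hK, smul_mul_aux, mul_assoc, hG1, mul_assoc, hP]
  have h2 : I * Q = lam • (P * 𝓛 t * U t * Q) - K * (P * U t * Q) := by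
    rw [hI, sub_mul, smul_mul_aux, mul_assoc, hQQ, mul_assoc (K),
      mul_assoc (P * U t), hQQ, ← mul_assoc]
  have key : lam • (P * 𝓛 t * U t) = K * (P * U t) + I * Q := by
    have hsplit : K * (P * U t) = K * (P * U t * P) + K * (P * U t * Q) := by
      rw [← mul_add, ← mul_add, hPQ1, mul_one]
    rw [hsplit, h1, h2]
    have : lam • (P * 𝓛 t * U t * P) + lam • (P * 𝓛 t * U t * Q)
        = lam • (P * 𝓛 t * U t) := by
      ext x
      have hx : P x + Q x = x := by
        rw [← ContinuousLinearMap.add_apply, hPQ1, ContinuousLinearMap.one_apply]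
      simp only [ContinuousLinearMap.add_apply, ContinuousLinearMap.smul_apply,
        ContinuousLinearMap.mul_apply, ← smul_add, ← map_add, hx]
    rw [add_assoc, add_sub_cancel, this]
  refine ⟨key, fun ρ₀ => ?_⟩
  set L : (Matrix (Fin n) (Fin n) ℂ →L[ℂ] Matrix (Fin n) (Fin n) ℂ) →L[ℂ]
      Matrix (Fin n) (Fin n) ℂ :=
    P.comp (ContinuousLinearMap.apply ℂ (Matrix (Fin n) (Fin n) ℂ) ρ₀) with hL
  have h' := (L.restrictScalars ℝ).hasFDerivAt.comp_hasDerivAt t (hU t)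
  convert h' using 1
  case e'_4 => rfl
  case e'_5 => rfl
  case e'_6 => rfl
  case e'_8 => rfl
  have := congrArg (fun (A : Matrix (Fin n) (Fin n) ℂ →L[ℂ] Matrix (Fin n) (Fin n) ℂ) => A ρ₀) key
  simp only [ContinuousLinearMap.add_apply, ContinuousLinearMap.mul_apply,
    ContinuousLinearMap.smul_apply, ContinuousLinearMap.zero_apply, map_zero, add_zero,
    ContinuousLinearMap.coe_comp', Function.comp_apply] at this ⊢
  rw [← this]
  simp [L, ContinuousLinearMap.mul_apply]
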